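/- Let Ω ⊂ Q^{n+1} be the set of all tuples A = (a_0,…,a_n) with a_j ∈ Q and |⟨a_j,a_k⟩ − 1| < 1 for all j and k. Then for all A ∈ Ω one has the bound |F(A)| < (π²(n+1)/4)^{(n+1)/4}. In particular F is bounded on Ω. -/

import Mathlib

open MeasureTheory
open scoped BigOperators

noncomputable section

/-- The standard complex bilinear form `⟨z,w⟩ = z₀w₀ + ⋯ + zₙwₙ` on `ℂ^{n+1}`. -/
def cbil {n : ℕ} (z w : Fin (n + 1) → ℂ) : ℂ := ∑ i, z i * w i

/-- `F(A) = det A ⬝ ∫_{t₀,…,tₙ ≥ 0} exp(−Σ_{j,k} ⟨a_j,a_k⟩ t_j t_k) dt`, where `A` is the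
matrix with columns `a₀, …, aₙ`. -/
def Fdet {n : ℕ} (A : Fin (n + 1) → (Fin (n + 1) → ℂ)) : ℂ :=
  (Matrix.of fun i j => A j i).det *
    ∫ t in {t : Fin (n + 1) → ℝ | ∀ i, 0 ≤ t i},
      Complex.exp (-∑ j, ∑ k, cbil (A j) (A k) * (t j * t k))

/-- The set `Ω ⊆ Q^{n+1}` of tuples `(a₀,…,aₙ)` of points of the quadric `Q` with
`|⟨a_j,a_k⟩ − 1| < 1` for all `j, k`. -/
def OmegaSet (n : ℕ) : Set (Fin (n + 1) → (Fin (n + 1) → ℂ)) :=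
  {A | (∀ j, cbil (A j) (A j) = 1) ∧
    ∀ j k, ‖cbil (A j) (A k) - 1‖ < 1}

/-! ### Auxiliary lemmas -/

open Matrix
open scoped ComplexOrder

/-- AM-GM inequality for finitely many nonnegative reals. -/
private lemma amgm {ι : Type*} [Fintype ι] [Nonempty ι] (f : ι → ℝ) (hf : ∀ i, 0 ≤ f i) :
    ∏ i, f i ≤ ((∑ i, f i) / (Fintype.card ι : ℝ)) ^ (Fintype.card ι) := by
  have hm0 : 0 < Fintype.card ι := Fintype.card_pos
  have hmR : (0:ℝ) < (Fintype.card ι : ℝ) := by exact_mod_cast hm0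
  have h := Real.geom_mean_le_arith_mean_weighted Finset.univ
      (fun _ => ((Fintype.card ι : ℝ))⁻¹) f (fun i _ => by positivity)
      (by rw [Finset.sum_const, Finset.card_univ, nsmul_eq_mul, mul_inv_cancel₀ hmR.ne'])
      (fun i _ => hf i)
  have hsum : ∑ i, ((Fintype.card ι : ℝ))⁻¹ * f i = (∑ i, f i) / (Fintype.card ι : ℝ) := by
    rw [← Finset.mul_sum]; ring
  rw [hsum] at h
  have ha : (0:ℝ) ≤ ∏ i, f i ^ ((Fintype.card ι : ℝ))⁻¹ :=
    Finset.prod_nonneg fun i _ => Real.rpow_nonneg (hf i) _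
  have hpow : (∏ i, f i ^ ((Fintype.card ι : ℝ))⁻¹) ^ (Fintype.card ι) = ∏ i, f i := by
    rw [← Finset.prod_pow]
    refine Finset.prod_congr rfl fun i _ => ?_
    rw [← Real.rpow_natCast (f i ^ ((Fintype.card ι : ℝ))⁻¹) (Fintype.card ι),
      ← Real.rpow_mul (hf i), inv_mul_cancel₀ hmR.ne', Real.rpow_one]
  calc ∏ i, f i = (∏ i, f i ^ ((Fintype.card ι : ℝ))⁻¹) ^ (Fintype.card ι) := hpow.symm
    _ ≤ ((∑ i, f i) / (Fintype.card ι : ℝ)) ^ (Fintype.card ι) := pow_le_pow_left₀ ha h _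

/-- The trace of a Hermitian matrix is the sum of its eigenvalues. -/
private lemma trace_eq_sum_eig {ι : Type*} [Fintype ι] [DecidableEq ι] {P : Matrix ι ι ℂ}
    (hP : P.IsHermitian) : P.trace = ((∑ i, hP.eigenvalues i : ℝ) : ℂ) := by
  have hU : star (hP.eigenvectorUnitary : Matrix ι ι ℂ) * (hP.eigenvectorUnitary : Matrix ι ι ℂ)
      = 1 := Matrix.mem_unitaryGroup_iff'.mp hP.eigenvectorUnitary.2
  conv_lhs => rw [hP.spectral_theorem]
  rw [Unitary.conjStarAlgAut_apply, Matrix.trace_mul_cycle, hU, one_mul, Matrix.trace_diagonal]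
  push_cast
  rfl

private lemma det_bound {n : ℕ} (A : Fin (n + 1) → (Fin (n + 1) → ℂ)) (hA : A ∈ OmegaSet n) :
    ‖(Matrix.of fun i j => A j i).det‖ ^ 4 < (4 * ((n : ℝ) + 1)) ^ (n + 1) := by
  obtain ⟨hA1, hA2⟩ := hA
  set B : Matrix (Fin (n+1)) (Fin (n+1)) ℂ := Matrix.of fun i j => A j i with hB
  set C : Matrix (Fin (n+1)) (Fin (n+1)) ℂ := Matrix.of fun j k => cbil (A j) (A k) with hCdef
  have hC : C = Bᵀ * B := by
    ext j k
    simp [hCdef, hB, Matrix.mul_apply, Matrix.transpose_apply, cbil]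
  have hdetC : C.det = B.det ^ 2 := by rw [hC, Matrix.det_mul, Matrix.det_transpose, sq]
  have hP : (C * Cᴴ).PosSemidef := Matrix.posSemidef_self_mul_conjTranspose C
  have hlam0 : ∀ i, 0 ≤ hP.1.eigenvalues i := hP.eigenvalues_nonneg
  have h1 : ((C * Cᴴ).det) = ((Complex.normSq C.det : ℝ) : ℂ) := by
    rw [Matrix.det_mul, Matrix.det_conjTranspose, ← Complex.mul_conj]
    rfl
  have hprod : ∏ i, hP.1.eigenvalues i = Complex.normSq C.det := by
    have h2' := (h1.symm.trans hP.1.det_eq_prod_eigenvalues)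
    have h2'' : ∏ i, ((hP.1.eigenvalues i : ℝ) : ℂ) = ((Complex.normSq C.det : ℝ) : ℂ) :=
      h2'.symm
    exact Complex.ofReal_injective (by exact_mod_cast h2'')
  have h3 : (C * Cᴴ).trace = ((∑ j, ∑ k, Complex.normSq (C j k) : ℝ) : ℂ) := by
    rw [Matrix.trace]
    push_cast
    refine Finset.sum_congr rfl fun j _ => ?_
    rw [Matrix.diag_apply, Matrix.mul_apply]
    refine Finset.sum_congr rfl fun k _ => ?_
    rw [Matrix.conjTranspose_apply, ← Complex.mul_conj]
    rfl
  have hsum : ∑ i, hP.1.eigenvalues i = ∑ j, ∑ k, Complex.normSq (C j k) := by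
    have := (trace_eq_sum_eig hP.1).symm.trans h3
    exact_mod_cast this
  have hentry : ∀ j k, Complex.normSq (C j k) < 4 := by
    intro j k
    have h1' := hA2 j k
    have habs : ‖C j k‖ < 2 := by
      have he : C j k = (cbil (A j) (A k) - 1) + 1 := by simp [hCdef]
      rw [he]
      calc ‖(cbil (A j) (A k) - 1) + 1‖
          ≤ ‖cbil (A j) (A k) - 1‖ + ‖(1:ℂ)‖ := norm_add_le _ _
        _ < 2 := by
            have habs1 : ‖(1:ℂ)‖ = 1 := norm_one
            linarith
    have hns : Complex.normSq (C j k) = ‖C j k‖ ^ 2 := (Complex.sq_norm _).symm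
    rw [hns]
    nlinarith [norm_nonneg (C j k)]
  have htr : ∑ i, hP.1.eigenvalues i < 4 * ((n:ℝ)+1)^2 := by
    calc ∑ i, hP.1.eigenvalues i = ∑ j, ∑ k, Complex.normSq (C j k) := hsum
      _ < ∑ _j : Fin (n+1), ∑ _k : Fin (n+1), (4:ℝ) := by
          refine Finset.sum_lt_sum_of_nonempty Finset.univ_nonempty fun j _ => ?_
          exact Finset.sum_lt_sum_of_nonempty Finset.univ_nonempty fun k _ => hentry j k
      _ = 4 * ((n:ℝ)+1)^2 := by
          simp [Finset.sum_const, Finset.card_univ]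
          push_cast
          ring
  have hAM := amgm hP.1.eigenvalues hlam0
  rw [Fintype.card_fin] at hAM
  have hsnn : 0 ≤ ∑ i, hP.1.eigenvalues i := Finset.sum_nonneg fun i _ => hlam0 i
  have hdiv : (∑ i, hP.1.eigenvalues i) / ((n+1 : ℕ) : ℝ) < 4*((n:ℝ)+1) := by
    rw [div_lt_iff₀ (by positivity)]
    push_cast
    nlinarith [htr]
  have hdivnn : 0 ≤ (∑ i, hP.1.eigenvalues i) / ((n+1:ℕ):ℝ) := by positivity
  have hfinal : ∏ i, hP.1.eigenvalues i < (4*((n:ℝ)+1))^(n+1) :=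
    lt_of_le_of_lt hAM (pow_lt_pow_left₀ hdiv hdivnn (Nat.succ_ne_zero n))
  have habs4 : ‖B.det‖ ^ 4 = Complex.normSq C.det := by
    rw [hdetC, map_pow, ← Complex.sq_norm]
    ring
  calc ‖B.det‖ ^ 4 = Complex.normSq C.det := habs4
    _ = ∏ i, hP.1.eigenvalues i := hprod.symm
    _ < (4*((n:ℝ)+1))^(n+1) := hfinal

private lemma int_bound {n : ℕ} (A : Fin (n + 1) → (Fin (n + 1) → ℂ)) (hA : A ∈ OmegaSet n) :
    ‖∫ t in {t : Fin (n + 1) → ℝ | ∀ i, 0 ≤ t i},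
      Complex.exp (-∑ j, ∑ k, cbil (A j) (A k) * (t j * t k))‖
      ≤ (Real.sqrt Real.pi / 2) ^ (n + 1) := by
  obtain ⟨hA1, hA2⟩ := hA
  set S : Set (Fin (n+1) → ℝ) := {t | ∀ i, 0 ≤ t i} with hSdef
  have hS : MeasurableSet S := by
    have hSeq : S = Set.pi Set.univ (fun _ : Fin (n+1) => Set.Ici (0:ℝ)) := by
      ext t; simp [hSdef, Set.mem_pi, Pi.le_def]
    rw [hSeq]; exact MeasurableSet.univ_pi fun i => measurableSet_Ici
  set g : (Fin (n+1) → ℝ) → ℝ := fun t => Real.exp (-∑ i, t i ^ 2) with hgdef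
  set h : ℝ → ℝ := Set.indicator (Set.Ici 0) (fun x => Real.exp (-x^2)) with hhdef
  have hexp1 : Integrable (fun x : ℝ => Real.exp (-x^2)) := by
    have := integrable_exp_neg_mul_sq (one_pos (α := ℝ))
    simpa using this
  have hh : Integrable h := hexp1.indicator measurableSet_Ici
  have hprodint : Integrable (fun t : Fin (n+1) → ℝ => ∏ i, h (t i)) :=
    Integrable.fintype_prod (fun _ => hh)
  have hid : S.indicator g = fun t => ∏ i, h (t i) := by
    funext t
    by_cases ht : t ∈ S
    · rw [Set.indicator_of_mem ht]
      have hgt : g t = ∏ i, Real.exp (-(t i)^2) := by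
        rw [← Real.exp_sum]
        simp [hgdef]
      rw [hgt]
      refine Finset.prod_congr rfl fun i _ => ?_
      rw [hhdef]
      exact (Set.indicator_of_mem (Set.mem_Ici.2 (ht i)) (fun x => Real.exp (-x^2))).symm
    · rw [Set.indicator_of_notMem ht]
      have hex : ∃ i, ¬ (0 ≤ t i) := by simpa [hSdef] using ht
      obtain ⟨i, hi⟩ := hex
      have hi' : t i ∉ Set.Ici (0:ℝ) := by simpa using hi
      exact (Finset.prod_eq_zero (Finset.mem_univ i) (Set.indicator_of_notMem hi' _)).symm
  have hgind : Integrable (S.indicator g) := by rw [hid]; exact hprodint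
  have hgint : IntegrableOn g S := (integrable_indicator_iff hS).1 hgind
  have hval : ∫ t in S, g t = (Real.sqrt Real.pi / 2) ^ (n+1) := by
    rw [← integral_indicator hS, hid,
      integral_fintype_prod_volume_eq_pow (ι := Fin (n+1)) h]
    have hint : ∫ x, h x = Real.sqrt Real.pi / 2 := by
      rw [hhdef, integral_indicator measurableSet_Ici, integral_Ici_eq_integral_Ioi]
      have := integral_gaussian_Ioi 1
      simpa using this
    rw [hint, Fintype.card_fin]
  have hnn : ∀ j k, 0 ≤ (cbil (A j) (A k)).re := by
    intro j k
    have h1 := hA2 j k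
    have h2 : |(cbil (A j) (A k) - 1).re| ≤ ‖cbil (A j) (A k) - 1‖ :=
      Complex.abs_re_le_norm _
    have h3 : -|(cbil (A j) (A k) - 1).re| ≤ (cbil (A j) (A k) - 1).re :=
      neg_abs_le _
    have h4 : (cbil (A j) (A k) - 1).re = (cbil (A j) (A k)).re - 1 := by
      simp [Complex.sub_re]
    linarith
  have hptw : ∀ t ∈ S, ‖Complex.exp (-∑ j, ∑ k, cbil (A j) (A k) * (t j * t k))‖ ≤ g t := by
    intro t ht
    have ht' : ∀ i, 0 ≤ t i := ht
    rw [Complex.norm_exp]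
    apply Real.exp_le_exp.2
    have hre : (-∑ j, ∑ k, cbil (A j) (A k) * ((t j : ℂ) * (t k : ℂ))).re
        = -∑ j, ∑ k, (cbil (A j) (A k)).re * (t j * t k) := by
      rw [Complex.neg_re, Complex.re_sum]
      congr 1
      refine Finset.sum_congr rfl fun j _ => ?_
      rw [Complex.re_sum]
      refine Finset.sum_congr rfl fun k _ => ?_
      rw [← Complex.ofReal_mul, Complex.mul_re, Complex.ofReal_re, Complex.ofReal_im]
      ring
    rw [hre]
    simp only [neg_le_neg_iff]
    calc ∑ i, t i ^ 2 = ∑ j, (cbil (A j) (A j)).re * (t j * t j) := by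
          refine Finset.sum_congr rfl fun j _ => ?_
          rw [hA1 j, Complex.one_re]
          ring
      _ ≤ ∑ j, ∑ k, (cbil (A j) (A k)).re * (t j * t k) :=
          Finset.sum_le_sum fun j _ => Finset.single_le_sum
            (fun k _ => mul_nonneg (hnn j k) (mul_nonneg (ht' j) (ht' k)))
            (Finset.mem_univ j)
  calc ‖∫ t in S, Complex.exp (-∑ j, ∑ k, cbil (A j) (A k) * (t j * t k))‖
      = ‖∫ t in S, Complex.exp (-∑ j, ∑ k, cbil (A j) (A k) * (t j * t k))‖ :=
        rfl
    _ ≤ ∫ t in S, g t :=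
        norm_integral_le_of_norm_le hgint ((ae_restrict_iff' hS).2 (ae_of_all _ hptw))
    _ = (Real.sqrt Real.pi / 2) ^ (n+1) := hval

/-- For all `A ∈ Ω` one has `|F(A)| < (π²(n+1)/4)^{(n+1)/4}`; in particular `F` is bounded
on `Ω`. -/
theorem Fdet_bound_on_Omega (n : ℕ) :
    (∀ A ∈ OmegaSet n,
      ‖Fdet A‖ < (Real.pi ^ 2 * (n + 1) / 4) ^ (((n : ℝ) + 1) / 4)) ∧
    ∃ C : ℝ, ∀ A ∈ OmegaSet n, ‖Fdet A‖ ≤ C := by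
  have hbase : (0:ℝ) < Real.pi ^ 2 * ((n:ℝ) + 1) / 4 := by positivity
  have key : ∀ A ∈ OmegaSet n,
      ‖Fdet A‖ < (Real.pi ^ 2 * ((n:ℝ) + 1) / 4) ^ (((n : ℝ) + 1) / 4) := by
    intro A hA
    have h1 := det_bound A hA
    have h2 := int_bound A hA
    rw [Fdet, norm_mul]
    set d := ‖(Matrix.of fun i j => A j i).det‖ with hd
    set I := ‖∫ t in {t : Fin (n + 1) → ℝ | ∀ i, 0 ≤ t i},
      Complex.exp (-∑ j, ∑ k, cbil (A j) (A k) * (t j * t k))‖ with hI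
    have hdnn : 0 ≤ d := norm_nonneg _
    have hstep : d * I ≤ d * (Real.sqrt Real.pi / 2) ^ (n+1) :=
      mul_le_mul_of_nonneg_left h2 hdnn
    have hT : 0 < (Real.pi ^ 2 * ((n:ℝ) + 1) / 4) ^ (((n : ℝ) + 1) / 4) :=
      Real.rpow_pos_of_pos hbase _
    have hmain : d * (Real.sqrt Real.pi / 2) ^ (n+1)
        < (Real.pi ^ 2 * ((n:ℝ) + 1) / 4) ^ (((n : ℝ) + 1) / 4) := by
      apply lt_of_pow_lt_pow_left₀ 4 hT.le
      have hT4 : ((Real.pi ^ 2 * ((n:ℝ) + 1) / 4) ^ (((n : ℝ) + 1) / 4)) ^ (4:ℕ)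
          = (Real.pi ^ 2 * ((n:ℝ) + 1) / 4) ^ (n+1) := by
        rw [← Real.rpow_natCast ((Real.pi ^ 2 * ((n:ℝ) + 1) / 4) ^ (((n : ℝ) + 1) / 4)) 4,
          ← Real.rpow_mul hbase.le, ← Real.rpow_natCast (Real.pi ^ 2 * ((n:ℝ) + 1) / 4) (n+1)]
        congr 1
        push_cast
        ring
      rw [hT4]
      have hsq4 : (Real.sqrt Real.pi / 2) ^ (4:ℕ) = Real.pi ^ 2 / 16 := by
        rw [div_pow, show (Real.sqrt Real.pi) ^ (4:ℕ) = ((Real.sqrt Real.pi) ^ 2) ^ 2 by ring,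
          Real.sq_sqrt Real.pi_nonneg]
        norm_num
      have hLHS : (d * (Real.sqrt Real.pi / 2) ^ (n+1)) ^ (4:ℕ)
          = d ^ 4 * (Real.pi ^ 2 / 16) ^ (n+1) := by
        rw [mul_pow, pow_right_comm, hsq4]
      rw [hLHS]
      calc d ^ 4 * (Real.pi ^ 2 / 16) ^ (n+1)
          < (4 * ((n:ℝ)+1)) ^ (n+1) * (Real.pi ^ 2 / 16) ^ (n+1) := by
            apply mul_lt_mul_of_pos_right h1
            positivity
        _ = (Real.pi ^ 2 * ((n:ℝ) + 1) / 4) ^ (n+1) := by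
            rw [← mul_pow]
            congr 1
            ring
    exact lt_of_le_of_lt hstep hmain
  exact ⟨key, ⟨(Real.pi ^ 2 * ((n:ℝ) + 1) / 4) ^ (((n : ℝ) + 1) / 4),
    fun A hA => (key A hA).le⟩⟩

end
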